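/- Let L > 0, let v : ℝ^N → ℝ^N be Lipschitz with constant L, and let Φ : ℝ × ℝ^N → ℝ^N be its global flow (Φ(0,x) = x and ∂Φ/∂t(t,x) = v(Φ(t,x)) for all t, x). Then for every τ with 0 < τ < 2π/L and every x ∈ ℝ^N, one has Φ(τ, x) = x if and only if v(x) = 0. -/

import Mathlib

set_option maxHeartbeats 1000000

open scoped ENNReal
open Set MeasureTheory intervalIntegral Real Complex ContinuousMap AddCircle


lemma parseval_interval {T : ℝ} (hT : 0 < T) [Fact (0 < T)] (H : C(AddCircle T, ℂ)) :
    ∑' n : ℤ, ‖fourierCoeff (H : AddCircle T → ℂ) n‖^2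
      = (1/T) * ∫ t in (0:ℝ)..(0+T), ‖H (t : AddCircle T)‖^2 := by
  have h1 := tsum_sq_fourierCoeff (toLp (E := ℂ) 2 haarAddCircle ℂ H)
  simp_rw [fourierCoeff_toLp] at h1
  rw [h1]
  have h2 : ∫ t : AddCircle T, ‖(toLp (E := ℂ) 2 haarAddCircle ℂ H : AddCircle T → ℂ) t‖^2 ∂haarAddCircle
      = ∫ t : AddCircle T, ‖H t‖^2 ∂haarAddCircle := by
    refine integral_congr_ae ?_
    filter_upwards [ContinuousMap.coeFn_toLp (p := 2) haarAddCircle (𝕜 := ℂ) H] with x hx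
    rw [hx]
  rw [h2]
  have h3 : ∫ t : AddCircle T, ‖H t‖^2 ∂(volume : Measure (AddCircle T))
      = T * ∫ t : AddCircle T, ‖H t‖^2 ∂haarAddCircle := by
    rw [volume_eq_smul_haarAddCircle, MeasureTheory.integral_smul_measure,
      ENNReal.toReal_ofReal hT.le, smul_eq_mul]
  have h4 := AddCircle.intervalIntegral_preimage T 0 (fun z : AddCircle T => ‖H z‖^2)
  rw [← h4] at h3
  rw [h3]
  field_simp

lemma summable_sq_fourierCoeff {T : ℝ} [Fact (0 < T)] (H : C(AddCircle T, ℂ)) :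
    Summable (fun n : ℤ => ‖fourierCoeff (H : AddCircle T → ℂ) n‖^2) := by
  have hm := lp.memℓp (fourierBasis.repr (toLp (E := ℂ) 2 haarAddCircle ℂ H))
  rw [memℓp_gen_iff (by norm_num)] at hm
  refine hm.congr fun n => ?_
  rw [fourierBasis_repr, fourierCoeff_toLp]
  norm_num [Real.rpow_natCast]

lemma wirtinger_complex {T : ℝ} (hT : 0 < T) (f g : ℝ → ℂ)
    (hderiv : ∀ t, HasDerivAt f (g t) t) (hg : Continuous g)
    (hper : f T = f 0) (hgper : g T = g 0)
    (hmean : ∫ t in (0:ℝ)..T, f t = 0) :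
    ∫ t in (0:ℝ)..T, ‖f t‖^2 ≤ (T / (2*Real.pi))^2 * ∫ t in (0:ℝ)..T, ‖g t‖^2 := by
  haveI : Fact (0 < T) := ⟨hT⟩
  have hf : Continuous f := by
    rw [continuous_iff_continuousAt]; exact fun t => (hderiv t).continuousAt
  have hab : (0:ℝ) < 0 + T := lt_add_of_pos_right 0 hT
  set c : ℤ → ℂ := fourierCoeffOn hab f with hc
  set d : ℤ → ℂ := fourierCoeffOn hab g with hd
  -- continuous lifts
  let F : C(AddCircle T, ℂ) :=
    ⟨AddCircle.liftIco T 0 f,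
      AddCircle.liftIco_zero_continuous hper.symm hf.continuousOn⟩
  let G : C(AddCircle T, ℂ) :=
    ⟨AddCircle.liftIco T 0 g,
      AddCircle.liftIco_zero_continuous hgper.symm hg.continuousOn⟩
  have hcF : ∀ n, fourierCoeff (F : AddCircle T → ℂ) n = c n := fun n =>
    fourierCoeff_liftIco_eq f n
  have hdG : ∀ n, fourierCoeff (G : AddCircle T → ℂ) n = d n := fun n =>
    fourierCoeff_liftIco_eq g n
  -- lifts agree with f, g on [0, T]
  have hlift : ∀ (h : ℝ → ℂ), h T = h 0 → ∀ t ∈ Icc (0:ℝ) T,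
      AddCircle.liftIco T 0 h t = h t := by
    intro h hp t ht
    rcases eq_or_lt_of_le ht.2 with heq | hlt
    · have hco : ((T : ℝ) : AddCircle T) = ((0:ℝ) : AddCircle T) := by
        simpa using AddCircle.coe_period (p := T)
      rw [heq, hco, AddCircle.liftIco_zero_coe_apply ⟨le_rfl, hT⟩]
      exact hp.symm
    · exact AddCircle.liftIco_zero_coe_apply ⟨ht.1, hlt⟩
  -- Parseval for f and g
  have hparF : ∑' n : ℤ, ‖c n‖^2 = (1/T) * ∫ t in (0:ℝ)..T, ‖f t‖^2 := by
    have hp := parseval_interval hT F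
    simp_rw [hcF] at hp
    rw [hp, zero_add]
    congr 1
    refine intervalIntegral.integral_congr fun t ht => ?_
    rw [uIcc_of_le hT.le] at ht
    show ‖AddCircle.liftIco T 0 f t‖^2 = _
    rw [hlift f hper t ht]
  have hparG : ∑' n : ℤ, ‖d n‖^2 = (1/T) * ∫ t in (0:ℝ)..T, ‖g t‖^2 := by
    have hp := parseval_interval hT G
    simp_rw [hdG] at hp
    rw [hp, zero_add]
    congr 1
    refine intervalIntegral.integral_congr fun t ht => ?_
    rw [uIcc_of_le hT.le] at ht
    show ‖AddCircle.liftIco T 0 g t‖^2 = _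
    rw [hlift g hgper t ht]
  have hsumc : Summable fun n : ℤ => ‖c n‖^2 := by
    have := summable_sq_fourierCoeff F
    simp_rw [hcF] at this; exact this
  have hsumd : Summable fun n : ℤ => ‖d n‖^2 := by
    have := summable_sq_fourierCoeff G
    simp_rw [hdG] at this; exact this
  -- coefficient relation
  have hcd : ∀ n : ℤ, n ≠ 0 → d n = (2*π*Complex.I*n/T) * c n := by
    intro n hn
    have h := fourierCoeffOn_of_hasDerivAt hab hn
      (fun x _ => hderiv x) ((hg.intervalIntegrable 0 (0+T)))
    rw [show f (0+T) = f 0 by rw [zero_add]; exact hper, sub_self, mul_zero, zero_sub] at h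
    push_cast at h
    have hπ : (π:ℂ) ≠ 0 := Complex.ofReal_ne_zero.mpr Real.pi_ne_zero
    have hTne : (T:ℂ) ≠ 0 := Complex.ofReal_ne_zero.mpr hT.ne'
    have hnne : (n:ℂ) ≠ 0 := Int.cast_ne_zero.mpr hn
    have hI := Complex.I_ne_zero
    rw [hc, hd]
    field_simp at h ⊢
    linear_combination -h
  have hc0 : c 0 = 0 := by
    rw [hc, fourierCoeffOn_eq_integral]
    simp only [neg_zero, fourier_zero, one_smul, zero_add, hmean, smul_zero]
  -- pointwise coefficient inequality
  have key : ∀ n : ℤ, (2*π/T)^2 * ‖c n‖^2 ≤ ‖d n‖^2 := by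
    intro n
    rcases eq_or_ne n 0 with rfl | hn
    · rw [hc0]; simp
    · rw [hcd n hn, norm_mul]
      have h1 : (1:ℝ) ≤ |(n:ℝ)| := by
        rw [← Int.cast_abs]; exact_mod_cast Int.one_le_abs hn
      have h2 : ‖(2*↑π*Complex.I*(n:ℂ)/↑T : ℂ)‖ = 2*π*|(n:ℝ)|/T := by
        simp [norm_div, norm_mul, Complex.norm_I, Complex.norm_real, abs_of_pos Real.pi_pos,
          abs_of_pos hT]
      rw [h2, mul_pow]
      have h3 : (2*π/T)^2 ≤ (2*π*|(n:ℝ)|/T)^2 := by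
        rw [div_pow, div_pow, div_le_div_iff_of_pos_right (by positivity)]
        nlinarith [Real.pi_pos, mul_le_mul h1 h1 (by linarith) (abs_nonneg (n:ℝ)), abs_nonneg (n:ℝ)]
      exact mul_le_mul_of_nonneg_right h3 (sq_nonneg _)
  have htsum : (2*π/T)^2 * ∑' n : ℤ, ‖c n‖^2 ≤ ∑' n : ℤ, ‖d n‖^2 := by
    rw [← tsum_mul_left]
    exact Summable.tsum_le_tsum key (hsumc.mul_left _) hsumd
  rw [hparF, hparG] at htsum
  have hπ := Real.pi_pos
  set A := ∫ t in (0:ℝ)..T, ‖f t‖^2 with hA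
  set B := ∫ t in (0:ℝ)..T, ‖g t‖^2 with hB
  have h6 : 4*π^2*A ≤ T^2*B := by
    have h7 := mul_le_mul_of_nonneg_left htsum (pow_pos hT 3).le
    calc 4*π^2*A = T^3 * ((2*π/T)^2 * (1/T * A)) := by field_simp; ring
    _ ≤ T^3*(1/T*B) := h7
    _ = T^2*B := by field_simp
  have hπ2 : (0:ℝ) < 4*π^2 := by positivity
  have hfin : (T/(2*π))^2*B = T^2*B/(4*π^2) := by
    rw [div_pow, show (2*π)^2 = 4*π^2 by ring, div_mul_eq_mul_div]
  rw [hfin, le_div_iff₀ hπ2]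
  linarith [h6]

lemma wirtinger_euclidean {N : ℕ} {T : ℝ} (hT : 0 < T)
    (f g : ℝ → EuclideanSpace ℝ (Fin N))
    (hderiv : ∀ t, HasDerivAt f (g t) t) (hg : Continuous g)
    (hper : f T = f 0) (hgper : g T = g 0)
    (hmean : ∫ t in (0:ℝ)..T, f t = 0) :
    ∫ t in (0:ℝ)..T, ‖f t‖^2 ≤ (T / (2*Real.pi))^2 * ∫ t in (0:ℝ)..T, ‖g t‖^2 := by
  have hf : Continuous f := by
    rw [continuous_iff_continuousAt]; exact fun t => (hderiv t).continuousAt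
  have hnorm : ∀ (y : EuclideanSpace ℝ (Fin N)), ‖y‖^2 = ∑ j, (y j)^2 := by
    intro y
    rw [EuclideanSpace.norm_eq, Real.sq_sqrt (by positivity)]
    simp [sq_abs]
  have hcont_f : ∀ j : Fin N, Continuous fun t => f t j := fun j =>
    (EuclideanSpace.proj j).continuous.comp hf
  have hcont_g : ∀ j : Fin N, Continuous fun t => g t j := fun j =>
    (EuclideanSpace.proj j).continuous.comp hg
  -- componentwise Wirtinger
  have hcomp : ∀ j : Fin N, ∫ t in (0:ℝ)..T, (f t j)^2
      ≤ (T / (2*Real.pi))^2 * ∫ t in (0:ℝ)..T, (g t j)^2 := by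
    intro j
    set Lj : EuclideanSpace ℝ (Fin N) →L[ℝ] ℂ :=
      Complex.ofRealCLM.comp (EuclideanSpace.proj j) with hLj
    have hW := wirtinger_complex hT (fun t => Lj (f t)) (fun t => Lj (g t))
      (fun t => Lj.hasFDerivAt.comp_hasDerivAt t (hderiv t))
      (Lj.continuous.comp hg)
      (by show Lj (f T) = Lj (f 0); rw [hper]) (by show Lj (g T) = Lj (g 0); rw [hgper])
      (by rw [ContinuousLinearMap.intervalIntegral_comp_comm Lj
            (hf.intervalIntegrable 0 T), hmean, map_zero])
    have hn1 : ∀ t, ‖Lj (f t)‖^2 = (f t j)^2 := by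
      intro t; simp [hLj, Complex.norm_real, _root_.sq_abs]
    have hn2 : ∀ t, ‖Lj (g t)‖^2 = (g t j)^2 := by
      intro t; simp [hLj, Complex.norm_real, _root_.sq_abs]
    simpa only [hn1, hn2] using hW
  -- sum over coordinates
  have hsplit : ∀ (h : ℝ → EuclideanSpace ℝ (Fin N)), Continuous h →
      ∫ t in (0:ℝ)..T, ‖h t‖^2 = ∑ j, ∫ t in (0:ℝ)..T, (h t j)^2 := by
    intro h hh
    rw [← intervalIntegral.integral_finset_sum]
    · exact intervalIntegral.integral_congr fun t _ => hnorm (h t)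
    · intro j _
      exact (((EuclideanSpace.proj j).continuous.comp hh).pow 2).intervalIntegrable 0 T
  rw [hsplit f hf, hsplit g hg, Finset.mul_sum]
  exact Finset.sum_le_sum fun j _ => hcomp j

set_option maxHeartbeats 1000000 in
lemma integral_norm_sub_sq {N : ℕ} {τ : ℝ} (u : ℝ → EuclideanSpace ℝ (Fin N))
    (hu : Continuous u)
    (hmean : ∫ s in (0:ℝ)..τ, u s = 0) (t : ℝ) :
    ∫ s in (0:ℝ)..τ, ‖u t - u s‖^2
      = τ * ‖u t‖^2 + ∫ s in (0:ℝ)..τ, ‖u s‖^2 := by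
  have hiu : IntervalIntegrable u volume 0 τ := hu.intervalIntegrable _ _
  have hinner : Continuous fun s => (inner ℝ (u t) (u s) : ℝ) :=
    (innerSL ℝ (u t)).continuous.comp hu
  have h1 : EqOn (fun s => ‖u t - u s‖^2)
      (fun s => ‖u t‖^2 - 2 * (inner ℝ (u t) (u s) : ℝ) + ‖u s‖^2) (uIcc 0 τ) := by
    intro s _
    exact norm_sub_sq_real _ _
  rw [intervalIntegral.integral_congr h1]
  have hI1 : IntervalIntegrable (fun _ : ℝ => ‖u t‖^2) volume 0 τ :=
    intervalIntegrable_const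
  have hI2 : IntervalIntegrable (fun s => 2 * (inner ℝ (u t) (u s) : ℝ)) volume 0 τ :=
    ((continuous_const.mul hinner).intervalIntegrable _ _)
  have hI3 : IntervalIntegrable (fun s => ‖u s‖^2) volume 0 τ :=
    ((hu.norm.pow 2).intervalIntegrable _ _)
  rw [intervalIntegral.integral_add (hI1.sub hI2) hI3,
    intervalIntegral.integral_sub hI1 hI2]
  have h2 : ∫ s in (0:ℝ)..τ, 2 * (inner ℝ (u t) (u s) : ℝ) = 0 := by
    rw [intervalIntegral.integral_const_mul]
    have h3 : ∫ s in (0:ℝ)..τ, (inner ℝ (u t) (u s) : ℝ)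
        = (inner ℝ (u t) (∫ s in (0:ℝ)..τ, u s) : ℝ) := by
      have := ContinuousLinearMap.intervalIntegral_comp_comm (innerSL ℝ (u t)) hiu
      simpa using this
    rw [h3, hmean, inner_zero_right, mul_zero]
  rw [h2, intervalIntegral.integral_const, sub_zero, smul_eq_mul, sub_zero, mul_comm]

/-- **Fixed points of small-time flow maps are equilibria.**  If `v` is
Lipschitz with constant `L` and `Φ` is its global flow, then for every
`0 < τ < 2π/L` the fixed point set of the time-`τ` map coincides with the
zero set of `v`. -/
theorem fixedPoints_of_small_time_map_eq_zeros {N : ℕ} (L : ℝ) (hL : 0 < L)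
    (v : EuclideanSpace ℝ (Fin N) → EuclideanSpace ℝ (Fin N))
    (hv : ∀ x y, ‖v x - v y‖ ≤ L * ‖x - y‖)
    (Φ : ℝ × EuclideanSpace ℝ (Fin N) → EuclideanSpace ℝ (Fin N))
    (hΦ0 : ∀ x, Φ (0, x) = x)
    (hΦd : ∀ t x, HasDerivAt (fun τ : ℝ => Φ (τ, x)) (v (Φ (t, x))) t)
    (τ : ℝ) (hτ0 : 0 < τ) (hτ : τ < 2 * Real.pi / L)
    (x : EuclideanSpace ℝ (Fin N)) :
    Φ (τ, x) = x ↔ v x = 0 := by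
  have hK : LipschitzWith (Real.toNNReal L) v := by
    apply LipschitzWith.of_dist_le_mul
    intro a b
    rw [dist_eq_norm, dist_eq_norm, Real.coe_toNNReal L hL.le]
    exact hv a b
  have hvcont : Continuous v := hK.continuous
  constructor
  · -- hard direction (Yorke)
    intro hfix
    set f : ℝ → EuclideanSpace ℝ (Fin N) := fun t => Φ (t, x) with hfdef
    set g : ℝ → EuclideanSpace ℝ (Fin N) := fun t => v (f t) with hgdef
    have hd : ∀ t, HasDerivAt f (g t) t := fun t => hΦd t x
    have hf : Continuous f := by
      rw [continuous_iff_continuousAt]; exact fun t => (hd t).continuousAt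
    have hg : Continuous g := hvcont.comp hf
    have hf0 : f 0 = x := hΦ0 x
    have hper : f τ = f 0 := by rw [hf0]; exact hfix
    have hgper : g τ = g 0 := by rw [hgdef]; simp only; rw [hper]
    have hIg : ∫ s in (0:ℝ)..τ, g s = 0 := by
      rw [intervalIntegral.integral_eq_sub_of_hasDerivAt (fun t _ => hd t)
        (hg.intervalIntegrable _ _), hper, sub_self]
    set m : EuclideanSpace ℝ (Fin N) := (τ⁻¹ : ℝ) • ∫ s in (0:ℝ)..τ, f s with hm
    set F : ℝ → EuclideanSpace ℝ (Fin N) := fun t => f t - m with hFdef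
    have hdF : ∀ t, HasDerivAt F (g t) t := fun t => (hd t).sub_const m
    have hFcont : Continuous F := hf.sub continuous_const
    have hIF : ∫ s in (0:ℝ)..τ, F s = 0 := by
      rw [hFdef]
      rw [intervalIntegral.integral_sub (hf.intervalIntegrable _ _) intervalIntegrable_const,
        intervalIntegral.integral_const, hm, sub_zero, smul_smul,
        mul_inv_cancel₀ hτ0.ne', one_smul, sub_self]
    have hFper : F τ = F 0 := by rw [hFdef]; simp only; rw [hper]
    set B := ∫ s in (0:ℝ)..τ, ‖g s‖^2 with hB
    set C := ∫ s in (0:ℝ)..τ, ‖F s‖^2 with hC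
    have hwirt : C ≤ (τ/(2*π))^2 * B := wirtinger_euclidean hτ0 F g hdF hg hFper hgper hIF
    have hptwise : ∀ t, τ*‖g t‖^2 + B ≤ L^2 * (τ*‖F t‖^2 + C) := by
      intro t
      have e1 := integral_norm_sub_sq g hg hIg t
      have e2 := integral_norm_sub_sq F hFcont hIF t
      have e3 : ∫ s in (0:ℝ)..τ, ‖g t - g s‖^2
          ≤ ∫ s in (0:ℝ)..τ, L^2 * ‖F t - F s‖^2 := by
        apply intervalIntegral.integral_mono_on hτ0.le
          (((continuous_const.sub hg).norm.pow 2).intervalIntegrable _ _)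
          ((continuous_const.mul ((continuous_const.sub hFcont).norm.pow 2)).intervalIntegrable _ _)
        intro s _
        have h5 : F t - F s = f t - f s := by rw [hFdef]; simp only; abel
        have h4 : ‖g t - g s‖ ≤ L * ‖F t - F s‖ := by
          rw [h5]; exact hv (f t) (f s)
        show ‖g t - g s‖^2 ≤ L^2 * ‖F t - F s‖^2
        nlinarith [norm_nonneg (g t - g s), norm_nonneg (F t - F s), h4, hL.le]
      rw [e1] at e3
      rw [intervalIntegral.integral_const_mul, e2] at e3
      exact e3
    have hint := intervalIntegral.integral_mono_on (μ := volume) (f := fun t => τ*‖g t‖^2 + B)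
      (g := fun t => L^2*(τ*‖F t‖^2 + C)) hτ0.le
      (((continuous_const.mul (hg.norm.pow 2)).add continuous_const).intervalIntegrable _ _)
      ((continuous_const.mul ((continuous_const.mul (hFcont.norm.pow 2)).add
        continuous_const)).intervalIntegrable _ _)
      (fun t _ => hptwise t)
    have hleft : ∫ t in (0:ℝ)..τ, (τ*‖g t‖^2 + B) = τ*B + τ*B := by
      rw [intervalIntegral.integral_add (f := fun t => τ*‖g t‖^2)
          ((continuous_const.mul (hg.norm.pow 2)).intervalIntegrable _ _)
          intervalIntegrable_const,
        intervalIntegral.integral_const_mul, intervalIntegral.integral_const, sub_zero,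
        smul_eq_mul]
    have hright : ∫ t in (0:ℝ)..τ, L^2*(τ*‖F t‖^2 + C) = L^2*(τ*C + τ*C) := by
      rw [intervalIntegral.integral_const_mul,
        intervalIntegral.integral_add (f := fun t => τ*‖F t‖^2)
          ((continuous_const.mul (hFcont.norm.pow 2)).intervalIntegrable _ _)
          intervalIntegrable_const,
        intervalIntegral.integral_const_mul, intervalIntegral.integral_const, sub_zero,
        smul_eq_mul]
    rw [hleft, hright] at hint
    have hBC : B ≤ L^2 * C := by nlinarith [hint, hτ0]
    have hBnn : 0 ≤ B := intervalIntegral.integral_nonneg hτ0.le (fun s _ => by positivity)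
    have hπ := Real.pi_pos
    have hLτ : τ * L < 2*π := (lt_div_iff₀ hL).mp hτ
    have hkey : L^2*(τ/(2*π))^2 < 1 := by
      have h6 : L^2*(τ/(2*π))^2 = (τ*L)^2/(2*π)^2 := by ring
      rw [h6, div_lt_one (by positivity)]
      nlinarith [hLτ, mul_pos hτ0 hL]
    have hB0 : B = 0 := by
      by_contra hB0'
      have hBpos : 0 < B := lt_of_le_of_ne hBnn (Ne.symm hB0')
      nlinarith [hBC, hwirt, hkey, hBpos, sq_nonneg L]
    by_contra hvx
    have hg0 : g 0 = v x := by rw [hgdef]; simp only; rw [hf0]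
    have hu0 : 0 < ‖g 0‖^2 := by
      rw [hg0]; exact pow_pos (norm_pos_iff.mpr hvx) 2
    have hev : ∀ᶠ s in nhds (0:ℝ), 0 < ‖g s‖^2 :=
      ((hg.norm.pow 2).continuousAt).eventually (eventually_gt_nhds hu0)
    obtain ⟨ε, hε, hball⟩ := Metric.eventually_nhds_iff.mp hev
    have hε'pos : 0 < min ε τ := lt_min hε hτ0
    have hpos : 0 < ∫ s in (0:ℝ)..(min ε τ), ‖g s‖^2 := by
      apply intervalIntegral.intervalIntegral_pos_of_pos_on
        ((hg.norm.pow 2).intervalIntegrable _ _) _ hε'pos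
      intro s hs
      apply hball
      rw [Real.dist_eq, sub_zero, abs_of_pos hs.1]
      exact hs.2.trans_le (min_le_left _ _)
    have hmono : ∫ s in (0:ℝ)..(min ε τ), ‖g s‖^2 ≤ ∫ s in (0:ℝ)..τ, ‖g s‖^2 := by
      apply intervalIntegral.integral_mono_interval le_rfl hε'pos.le (min_le_right _ _)
        (Filter.Eventually.of_forall fun s => by show (0:ℝ) ≤ ‖g s‖^2; positivity)
        ((hg.norm.pow 2).intervalIntegrable _ _)
    rw [← hB] at hmono
    linarith [hmono, hpos, hB0]
  · -- easy direction
    intro hvx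
    have hsol := ODE_solution_unique (v := fun _ : ℝ => v) (K := Real.toNNReal L)
      (f := fun t => Φ (t, x)) (g := fun _ : ℝ => x) (a := 0) (b := τ)
      (fun _ => hK)
      (Continuous.continuousOn (by
        rw [continuous_iff_continuousAt]; exact fun t => (hΦd t x).continuousAt))
      (fun t _ => (hΦd t x).hasDerivWithinAt)
      continuousOn_const
      (fun t _ => by
        have : HasDerivWithinAt (fun _ : ℝ => x) 0 (Ici t) t := hasDerivWithinAt_const t _ x
        simpa [hvx] using this)
      (show Φ ((0:ℝ), x) = x from hΦ0 x)
    exact hsol ⟨hτ0.le, le_rfl⟩
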